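/- arXiv:2209.12718 — 3 statements merged into one kernel-verified Lean document; each statement's English description precedes it below -/
import Mathlib

section
/- Let R be a Noetherian local ring and M a finitely generated R-module with finite projective dimension n. Then Ext_R^n(M, R) ≠ 0. -/
open CategoryTheory

/-- The `i`-th Ext group of `R`-modules `M` and `N`. -/
noncomputable abbrev ExtGroup (R : Type) [CommRing R] (M N : ModuleCat.{0} R) (i : ℕ) : Type :=
  (((Ext R (ModuleCat.{0} R) i).obj (Opposite.op M)).obj N)

/-- `IsSyzygyOf R n K M`: `K` is an `n`-th syzygy of `M` in a resolution of `M` by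
finitely generated free `R`-modules. -/
inductive IsSyzygyOf (R : Type) [CommRing R] : ℕ → ModuleCat.{0} R → ModuleCat.{0} R → Prop
  | zero (M : ModuleCat.{0} R) : IsSyzygyOf R 0 M M
  | succ {n : ℕ} {K N M : ModuleCat.{0} R} (F : ModuleCat.{0} R)
      (hfree : Module.Free R F) (hfin : Module.Finite R F)
      (f : K →ₗ[R] F) (g : F →ₗ[R] N)
      (hf : Function.Injective f) (hg : Function.Surjective g)
      (hfg : LinearMap.range f = LinearMap.ker g)
      (hN : IsSyzygyOf R n N M) : IsSyzygyOf R (n + 1) K M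

/-- A finitely generated module over a Noetherian local ring has projective dimension
at most `n` iff some `n`-th syzygy of it (in a finite free resolution) is free. -/
def ProjDimLE (R : Type) [CommRing R] (n : ℕ) (M : ModuleCat.{0} R) : Prop :=
  ∃ K : ModuleCat.{0} R, IsSyzygyOf R n K M ∧ Module.Free R K

namespace ExtNonvanishingAux

open CategoryTheory Limits HomologicalComplex Opposite

variable {R : Type} [CommRing R]

section Glue

variable {K G N : ModuleCat.{0} R}

/-- The objects of the complex obtained by gluing a projective resolution of `K`
on top of `G`, given a short exact sequence `0 → K → G → N → 0`. -/
noncomputable def glueX (P : ProjectiveResolution K) (G : ModuleCat.{0} R) :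
    ℕ → ModuleCat.{0} R
  | 0 => G
  | n + 1 => P.complex.X n

/-- The augmentation map `P.complex.X 0 ⟶ K`. -/
noncomputable def aug (P : ProjectiveResolution K) : P.complex.X 0 ⟶ K :=
  P.π.f 0

instance aug_epi (P : ProjectiveResolution K) : Epi (aug P) := by
  show Epi (P.π.f 0); infer_instance

lemma d_comp_aug (P : ProjectiveResolution K) : P.complex.d 1 0 ≫ aug P = 0 :=
  P.complex_d_comp_π_f_zero

/-- The differentials of the glued complex. -/
noncomputable def glueD (P : ProjectiveResolution K) (f : K ⟶ G) :
    ∀ n, glueX P G (n + 1) ⟶ glueX P G n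
  | 0 => aug P ≫ f
  | n + 1 => P.complex.d (n + 1) n

/-- The glued complex. -/
noncomputable def glueComplex (P : ProjectiveResolution K) (f : K ⟶ G) :
    ChainComplex (ModuleCat.{0} R) ℕ :=
  ChainComplex.of (glueX P G) (glueD P f) (by
    rintro (_ | n)
    · show P.complex.d 1 0 ≫ (aug P ≫ f) = 0
      rw [← Category.assoc, d_comp_aug, zero_comp]
    · show P.complex.d (n + 2) (n + 1) ≫ P.complex.d (n + 1) n = 0
      simp)

variable (P : ProjectiveResolution K) (f : K ⟶ G) (g : G ⟶ N)

lemma glue_d_one_zero : (glueComplex P f).d 1 0 = aug P ≫ f := by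
  exact ChainComplex.of_d (glueX P G) (glueD P f) 0

lemma glue_d_succ (n : ℕ) :
    (glueComplex P f).d (n + 2) (n + 1) = P.complex.d (n + 1) n := by
  exact ChainComplex.of_d (glueX P G) (glueD P f) (n + 1)

variable (hf : Function.Injective f) (hg : Function.Surjective g)
  (hker : LinearMap.range f.hom = LinearMap.ker g.hom)

include hker in
lemma f_comp_g : f ≫ g = 0 := by
  ext x
  have : f x ∈ LinearMap.ker g.hom := hker ▸ LinearMap.mem_range_self f.hom x
  simpa using this

/-- The morphism from the glued complex to `N` in degree `0`. -/
noncomputable def gluePi (hker : LinearMap.range f.hom = LinearMap.ker g.hom) :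
    glueComplex P f ⟶ (ChainComplex.single₀ (ModuleCat.{0} R)).obj N :=
  (ChainComplex.toSingle₀Equiv _ N).symm ⟨g, by
    rw [glue_d_one_zero]
    exact (Category.assoc (aug P) f g).trans (by rw [f_comp_g f g hker]; exact comp_zero)⟩

lemma gluePi_f_zero : (gluePi P f g hker).f 0 = g := by
  exact ChainComplex.toSingle₀Equiv_symm_apply_f_zero _ _

include hf hg hker in
lemma glue_exactAt_succ (n : ℕ) : (glueComplex P f).ExactAt (n + 1) := by
  rw [HomologicalComplex.exactAt_iff' _ (n + 2) (n + 1) n (by simp) (by simp),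
    ShortComplex.moduleCat_exact_iff]
  intro x hx
  dsimp [HomologicalComplex.sc', HomologicalComplex.shortComplexFunctor'] at x hx ⊢
  cases n with
  | zero =>
    rw [glue_d_one_zero] at hx
    have hax : (aug P) x = 0 := by
      apply hf
      rw [map_zero]
      exact hx
    obtain ⟨y, hy⟩ := (ShortComplex.moduleCat_exact_iff _).1 P.exact₀ x hax
    refine ⟨y, ?_⟩
    rw [glue_d_succ]
    exact hy
  | succ n =>
    rw [glue_d_succ] at hx
    obtain ⟨y, hy⟩ := (ShortComplex.moduleCat_exact_iff _).1 (P.exact_succ n) x hx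
    refine ⟨y, ?_⟩
    rw [glue_d_succ]
    exact hy

/-- Gluing a projective resolution of `K` with a short exact sequence
`0 → K → G → N → 0` (with `G` projective) gives a projective resolution of `N`. -/
noncomputable def glueRes [Projective G] (hf : Function.Injective f)
    (hg : Function.Surjective g) (hker : LinearMap.range f.hom = LinearMap.ker g.hom) :
    ProjectiveResolution N where
  complex := glueComplex P f
  projective n := by
    cases n with
    | zero => exact ‹Projective G›
    | succ n => exact P.projective n
  π := gluePi P f g hker
  quasiIso := ⟨fun n => by
    cases n with
    | zero =>
      rw [ChainComplex.quasiIsoAt₀_iff, ShortComplex.quasiIso_iff_of_zeros']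
      · constructor
        · rw [ShortComplex.moduleCat_exact_iff]
          intro x hx
          dsimp [HomologicalComplex.shortComplexFunctor'] at x hx ⊢
          rw [gluePi_f_zero] at hx
          have : x ∈ LinearMap.ker g.hom := hx
          rw [← hker] at this
          obtain ⟨k, hk⟩ := this
          obtain ⟨y, hy⟩ := (ModuleCat.epi_iff_surjective (aug P)).1 (aug_epi P) k
          refine ⟨y, ?_⟩
          rw [glue_d_one_zero]
          show f ((aug P) y) = x
          rw [hy, hk]
        · show Epi ((gluePi P f g hker).f 0)
          rw [gluePi_f_zero]
          exact (ModuleCat.epi_iff_surjective g).2 hg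
      · rfl
      · rfl
      · rfl
    | succ n =>
      rw [quasiIsoAt_iff_exactAt']
      · exact glue_exactAt_succ P f g hf hg hker n
      · exact ChainComplex.exactAt_succ_single_obj _ _⟩

/-- The homology comparison: in degrees `≥ 2`, the Hom-complex of the glued resolution
computes the Ext of `K` shifted by one. -/
noncomputable def glueHomologyIso (Y : ModuleCat.{0} R) (j : ℕ) :
    ((glueComplex P f).linearYonedaObj R Y).homology (j + 2) ≅
      (P.complex.linearYonedaObj R Y).homology (j + 1) := by
  refine HomologicalComplex.homologyIsoSc' _ (j + 1) (j + 2) (j + 3)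
      ((ComplexShape.up ℕ).prev_eq' rfl) ((ComplexShape.up ℕ).next_eq' rfl) ≪≫
    ShortComplex.homologyMapIso ?_ ≪≫
    (HomologicalComplex.homologyIsoSc' _ j (j + 1) (j + 2)
      ((ComplexShape.up ℕ).prev_eq' rfl) ((ComplexShape.up ℕ).next_eq' rfl)).symm
  refine ShortComplex.isoMk (Iso.refl _) (Iso.refl _) (Iso.refl _) ?_ ?_
  · dsimp [HomologicalComplex.sc', HomologicalComplex.shortComplexFunctor']
    erw [Category.id_comp, Category.comp_id]
    simp only [ChainComplex.linearYonedaObj_d]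
    rw [glue_d_succ]
    rfl
  · dsimp [HomologicalComplex.sc', HomologicalComplex.shortComplexFunctor']
    erw [Category.id_comp, Category.comp_id]
    simp only [ChainComplex.linearYonedaObj_d]
    rw [glue_d_succ]
    rfl

end Glue

section ExtLemmas

/-- Dimension shifting, one step. -/
lemma step_isZero_iff {K G N' : ModuleCat.{0} R} [Projective G] (f : K ⟶ G) (g : G ⟶ N')
    (hf : Function.Injective f) (hg : Function.Surjective g)
    (hker : LinearMap.range f.hom = LinearMap.ker g.hom) (i : ℕ) (Y : ModuleCat.{0} R) :
    IsZero (((Ext R (ModuleCat.{0} R) (i + 2)).obj (op N')).obj Y) ↔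
      IsZero (((Ext R (ModuleCat.{0} R) (i + 1)).obj (op K)).obj Y) := by
  let P : ProjectiveResolution K := ProjectiveResolution.of K
  let Q : ProjectiveResolution N' := glueRes P f g hf hg hker
  have e : (((Ext R (ModuleCat.{0} R) (i + 2)).obj (op N')).obj Y) ≅
      (((Ext R (ModuleCat.{0} R) (i + 1)).obj (op K)).obj Y) :=
    Q.isoExt (i + 2) Y ≪≫ glueHomologyIso P f Y i ≪≫ (P.isoExt (i + 1) Y).symm
  exact ⟨fun h => h.of_iso e.symm, fun h => h.of_iso e⟩

/-- Dimension shifting along a syzygy chain. -/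
lemma shift_isZero_iff {m : ℕ} {N M : ModuleCat.{0} R} (h : IsSyzygyOf R m N M) :
    ∀ (i : ℕ) (Y : ModuleCat.{0} R),
      IsZero (((Ext R (ModuleCat.{0} R) (m + i + 1)).obj (op M)).obj Y) ↔
        IsZero (((Ext R (ModuleCat.{0} R) (i + 1)).obj (op N)).obj Y) := by
  induction h with
  | zero M₀ => intro i Y; rw [Nat.zero_add]
  | succ F hfree hfin f g hf hg hker hN ih =>
    rename_i m K N M
    intro i Y
    have harith : m + 1 + i + 1 = m + (i + 1) + 1 := by omega
    rw [harith, ih (i + 1) Y]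
    haveI := hfree
    haveI : Projective F := ModuleCat.projective_of_free (Module.Free.chooseBasis R F)
    exact step_isZero_iff (ModuleCat.ofHom f) (ModuleCat.ofHom g) hf hg hker i Y

lemma subsingleton_hom_of_isZero {A B : ModuleCat.{0} R} (h : IsZero A) :
    Subsingleton (A ⟶ B) :=
  ⟨fun a b => h.eq_of_src a b⟩

/-- If `Ext¹(N', Y) = 0` and `0 → K → G → N' → 0` is exact with `K`, `G` projective,
then every map `K ⟶ Y` extends to `G`. -/
lemma ext_one_surj {K G N' : ModuleCat.{0} R} [Projective K] [Projective G]
    (f : K ⟶ G) (g : G ⟶ N')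
    (hf : Function.Injective f) (hg : Function.Surjective g)
    (hker : LinearMap.range f.hom = LinearMap.ker g.hom) (Y : ModuleCat.{0} R)
    (hz : IsZero (((Ext R (ModuleCat.{0} R) 1).obj (op N')).obj Y)) (φ : K ⟶ Y) :
    ∃ ψ : G ⟶ Y, f ≫ ψ = φ := by
  let P : ProjectiveResolution K := ProjectiveResolution.self K
  let Q : ProjectiveResolution N' := glueRes P f g hf hg hker
  have h1 : IsZero (((glueComplex P f).linearYonedaObj R Y).homology 1) :=
    hz.of_iso (Q.isoExt 1 Y).symm
  have h2 : IsZero ((((glueComplex P f).linearYonedaObj R Y).sc' 0 1 2).homology) :=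
    h1.of_iso (HomologicalComplex.homologyIsoSc' _ 0 1 2
      ((ComplexShape.up ℕ).prev_eq' rfl) ((ComplexShape.up ℕ).next_eq' rfl)).symm
  have hex := (ShortComplex.exact_iff_isZero_homology _).2 h2
  rw [ShortComplex.moduleCat_exact_iff] at hex
  have hzero2 : IsZero ((glueComplex P f).X 2) := by
    show IsZero (P.complex.X 1)
    exact HomologicalComplex.isZero_single_obj_X _ 0 K 1 (by simp)
  haveI : Subsingleton ((glueComplex P f).X 2 ⟶ Y) := subsingleton_hom_of_isZero hzero2
  obtain ⟨ψ, hψ⟩ := hex φ (@Subsingleton.elim _ this _ _)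
  have haug : aug P = 𝟙 K := by
    simp [aug, P, ProjectiveResolution.self]
  have key : (HomologicalComplex.sc' ((glueComplex P f).linearYonedaObj R Y) 0 1 2).f ψ
      = f ≫ ψ := by
    have h0 : (HomologicalComplex.sc' ((glueComplex P f).linearYonedaObj R Y) 0 1 2).f ψ
        = (glueComplex P f).d 1 0 ≫ ψ := rfl
    rw [h0, glue_d_one_zero]
    apply ModuleCat.hom_ext
    apply LinearMap.ext
    intro x
    have hx : aug P x = x := by rw [haug]; rfl
    exact congrArg (ConcreteCategory.hom (f ≫ ψ)) hx
  rw [key] at hψ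
  exact ⟨ψ, hψ⟩

/-- If `Ext⁰(M, Y) = 0` with `M` projective, every map `M ⟶ Y` is zero. -/
lemma ext_zero_eq_zero {M : ModuleCat.{0} R} [Projective M] (Y : ModuleCat.{0} R)
    (hz : IsZero (((Ext R (ModuleCat.{0} R) 0).obj (op M)).obj Y)) (φ : M ⟶ Y) :
    φ = 0 := by
  let P : ProjectiveResolution M := ProjectiveResolution.self M
  have h1 : IsZero ((P.complex.linearYonedaObj R Y).homology 0) :=
    hz.of_iso (P.isoExt 0 Y).symm
  have hex : (P.complex.linearYonedaObj R Y).ExactAt 0 :=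
    (HomologicalComplex.exactAt_iff_isZero_homology _ _).2 h1
  rw [HomologicalComplex.exactAt_iff' _ 0 0 1 (by simp) ((ComplexShape.up ℕ).next_eq' rfl),
    ShortComplex.moduleCat_exact_iff] at hex
  have hzero1 : IsZero (P.complex.X 1) :=
    HomologicalComplex.isZero_single_obj_X _ 0 M 1 (by simp)
  haveI : Subsingleton (P.complex.X 1 ⟶ Y) := subsingleton_hom_of_isZero hzero1
  obtain ⟨y, hy⟩ := hex φ (@Subsingleton.elim _ this _ _)
  have hd : ((P.complex.linearYonedaObj R Y).d 0 0) = 0 :=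
    HomologicalComplex.shape _ 0 0 (by simp)
  have h0 : (HomologicalComplex.sc' (P.complex.linearYonedaObj R Y) 0 0 1).f y
      = (P.complex.linearYonedaObj R Y).d 0 0 y := rfl
  rw [h0, hd] at hy
  rw [← hy]
  rfl

end ExtLemmas

section Splitting

/-- The splitting argument: with enough extensions of maps to `R`, the quotient `N`
of a short exact sequence `0 → K → F → N → 0` of f.g. modules over a Noetherian
local ring (with `K`, `F` free) is free. -/
lemma free_of_ext_surj [IsNoetherianRing R] [IsLocalRing R] {K F N : ModuleCat.{0} R}
    (hKfree : Module.Free R K) (hFfree : Module.Free R F) (hFfin : Module.Finite R F)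
    (f : K →ₗ[R] F) (g : F →ₗ[R] N) (hf : Function.Injective f) (hg : Function.Surjective g)
    (hker : LinearMap.range f = LinearMap.ker g)
    (hsurj : ∀ φ : K →ₗ[R] R, ∃ ψ : F →ₗ[R] R, ψ ∘ₗ f = φ) :
    Module.Free R N := by
  haveI := hKfree
  haveI := hFfree
  haveI := hFfin
  haveI : IsNoetherian R F := isNoetherian_of_isNoetherianRing_of_finite R F
  haveI : IsNoetherian R K := isNoetherian_of_injective f hf
  haveI : Module.Finite R K := ⟨IsNoetherian.noetherian ⊤⟩
  let b := Module.Free.chooseBasis R K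
  choose ψ hψ using fun i => hsurj (b.coord i)
  let r : F →ₗ[R] K := ∑ i, (ψ i).smulRight (b i)
  have hr : ∀ k : K, r (f k) = k := by
    intro k
    have hco : ∀ i, ψ i (f k) = b.repr k i := by
      intro i
      have := congrArg (fun (u : K →ₗ[R] R) => u k) (hψ i)
      simpa [Module.Basis.coord_apply] using this
    calc r (f k) = ∑ i, (b.repr k i) • b i := by
          simp [r, LinearMap.sum_apply, LinearMap.smulRight_apply, hco]
      _ = k := b.sum_repr k
  set p : F →ₗ[R] F := LinearMap.id - f ∘ₗ r with hpdef
  have hpker : LinearMap.ker g ≤ LinearMap.ker p := by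
    rw [← hker]
    rintro x ⟨k, rfl⟩
    simp [hpdef, hr]
  let q0 : (F ⧸ LinearMap.ker g) →ₗ[R] F := Submodule.liftQ _ p hpker
  let e : (F ⧸ LinearMap.ker g) ≃ₗ[R] N := g.quotKerEquivOfSurjective hg
  let q : N →ₗ[R] F := q0 ∘ₗ (e.symm : N →ₗ[R] F ⧸ LinearMap.ker g)
  have hgf : ∀ k, g (f k) = 0 := by
    intro k
    have : f k ∈ LinearMap.ker g := hker ▸ LinearMap.mem_range_self f k
    simpa using this
  have hq : g ∘ₗ q = LinearMap.id := by
    apply LinearMap.ext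
    intro nn
    obtain ⟨x, rfl⟩ := hg nn
    have he : e.symm (g x) = Submodule.Quotient.mk x := by
      apply e.injective
      rw [LinearEquiv.apply_symm_apply]
      simp [e, LinearMap.quotKerEquivOfSurjective, LinearMap.quotKerEquivRange]
    show g (q0 (e.symm (g x))) = g x
    rw [he]
    show g (q0 (Submodule.Quotient.mk x)) = g x
    have : q0 (Submodule.Quotient.mk x) = p x := Submodule.liftQ_apply _ _ _
    rw [this]
    simp [hpdef, hgf]
  haveI : Module.Projective R N := Module.Projective.of_split q g hq
  haveI : Module.Finite R N := Module.Finite.of_surjective g hg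
  haveI : Module.FinitePresentation R N := Module.finitePresentation_of_finite R N
  exact Module.free_of_flat_of_isLocalRing

end Splitting

end ExtNonvanishingAux

open ExtNonvanishingAux Opposite CategoryTheory.Limits

/-- If `M` is a nonzero finitely generated module over a Noetherian local ring `R`
with finite projective dimension `n`, then `Ext_R^n(M, R) ≠ 0`. -/
theorem stmt_0 (R : Type) [CommRing R] [IsNoetherianRing R] [IsLocalRing R]
    (M : ModuleCat.{0} R) (hM : Nontrivial M) (hfg : Module.Finite R M) (n : ℕ)
    (hpd : ProjDimLE R n M) (hmin : ∀ m : ℕ, ProjDimLE R m M → n ≤ m) :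
    ¬ Subsingleton (ExtGroup R M (ModuleCat.of R R) n) := by
  intro hsub
  obtain ⟨K, hK, hKfree⟩ := hpd
  have hzero : IsZero (((Ext R (ModuleCat.{0} R) n).obj (op M)).obj (ModuleCat.of R R)) := by
    haveI := hsub
    exact ModuleCat.isZero_of_subsingleton _
  cases hK with
  | zero =>
    haveI := hKfree
    haveI : Projective M := ModuleCat.projective_of_free (Module.Free.chooseBasis R M)
    let b := Module.Free.chooseBasis R M
    haveI : Nonempty (Module.Free.ChooseBasisIndex R M) := b.index_nonempty
    obtain ⟨i⟩ := this
    have hφ : (b.coord i : M →ₗ[R] R) = (0 : M →ₗ[R] R) :=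
      congrArg ModuleCat.Hom.hom (ext_zero_eq_zero (ModuleCat.of R R) hzero (ModuleCat.ofHom (b.coord i)))
    have h1 := DFunLike.congr_fun hφ (b i)
    exact one_ne_zero (α := R) (by simpa using h1)
  | succ F hFfree hFfin f g hf hg hker hN =>
    rename_i m N
    have h1 : IsZero (((Ext R (ModuleCat.{0} R) (0 + 1)).obj (op N)).obj (ModuleCat.of R R)) := by
      refine (shift_isZero_iff hN 0 (ModuleCat.of R R)).1 ?_
      have harith : m + 0 + 1 = m + 1 := by omega
      rw [harith]
      exact hzero
    haveI := hKfree
    haveI := hFfree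
    haveI : Projective K := ModuleCat.projective_of_free (Module.Free.chooseBasis R K)
    haveI : Projective F := ModuleCat.projective_of_free (Module.Free.chooseBasis R F)
    have hsurj : ∀ φ : K →ₗ[R] R, ∃ ψ : F →ₗ[R] R, ψ ∘ₗ f = φ := by
      intro φ
      obtain ⟨ψ, hψ⟩ := ext_one_surj (ModuleCat.ofHom f) (ModuleCat.ofHom g) hf hg hker (ModuleCat.of R R)
        (by simpa using h1) (ModuleCat.ofHom φ)
      exact ⟨ψ.hom, congrArg ModuleCat.Hom.hom hψ⟩
    have hNfree : Module.Free R N := free_of_ext_surj hKfree hFfree hFfin f g hf hg hker hsurj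
    have hple : ProjDimLE R m M := ⟨N, hN, hNfree⟩
    have := hmin m hple
    omega
end

section
/- Let R be a Noetherian local ring satisfying the condition: for every finitely generated R-module M, if Ext_R^i(M, M ⊕ R) = 0 for all i sufficiently large, then pd_R M < ∞. Then for every finitely generated R-module M, the equality pd_R M = sup { i ∈ ℤ : Ext_R^i(M, M ⊕ R) ≠ 0 } holds. -/
open CategoryTheory

/-- The projective dimension of `M`, as an element of `ℕ∞` (`⊤` if infinite). -/
noncomputable def projDim (R : Type) [CommRing R] (M : ModuleCat.{0} R) : ℕ∞ :=
  sInf {n : ℕ∞ | ∃ k : ℕ, n = k ∧ ProjDimLE R k M}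

set_option maxHeartbeats 1000000

section Helpers
variable {R : Type} [CommRing R]

lemma subsingleton_iff_of_iso {X Y : ModuleCat.{0} R} (e : X ≅ Y) :
    Subsingleton X ↔ Subsingleton Y :=
  Equiv.subsingleton_congr ((forget (ModuleCat R)).mapIso e).toEquiv

lemma subsingleton_iff_isZero (X : ModuleCat.{0} R) :
    Subsingleton X ↔ Limits.IsZero X := by
  constructor
  · intro h; exact ModuleCat.isZero_of_subsingleton X
  · intro h
    have : Subsingleton (ModuleCat.of R PUnit) := by
      constructor; intro a b; exact Subsingleton.elim a b
    exact (subsingleton_iff_of_iso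
      (h.iso (ModuleCat.isZero_of_subsingleton (ModuleCat.of R PUnit)))).2 this

lemma ext_subsingleton_iff (K Y : ModuleCat.{0} R) (P : ProjectiveResolution K) (m : ℕ) :
    Subsingleton (ExtGroup R K Y (m+1)) ↔
      ∀ φ : (P.complex.X (m+1) ⟶ Y), P.complex.d (m+2) (m+1) ≫ φ = 0 →
        ∃ ψ : (P.complex.X m ⟶ Y), P.complex.d (m+1) m ≫ ψ = φ := by
  have e1 := P.isoExt (R := R) (m+1) Y
  have e2 := (P.complex.linearYonedaObj R Y).homologyIsoSc' m (m+1) (m+2) (by simp) (by simp)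
  rw [subsingleton_iff_of_iso (e1 ≪≫ e2), subsingleton_iff_isZero,
    ← ShortComplex.exact_iff_isZero_homology, ShortComplex.moduleCat_exact_iff]
  constructor
  · intro h φ hφ
    obtain ⟨ψ, hψ⟩ := h φ hφ
    exact ⟨ψ, hψ⟩
  · intro h φ hφ
    obtain ⟨ψ, hψ⟩ := h φ hφ
    exact ⟨ψ, hψ⟩

end Helpers
section Glue
variable {R : Type} [CommRing R]
variable {K F N : ModuleCat.{0} R} (f : K ⟶ F) (g : F ⟶ N)
variable (P : ProjectiveResolution K)

noncomputable def glueComplex : ChainComplex (ModuleCat.{0} R) ℕ :=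
  ChainComplex.of
    (fun n => match n with | 0 => F | (n+1) => P.complex.X n)
    (fun n => match n with
      | 0 => (P.π.f 0 ≫ f : P.complex.X 0 ⟶ F)
      | (n+1) => P.complex.d (n+1) n)
    (fun n => by
      match n with
      | 0 =>
        show P.complex.d 1 0 ≫ P.π.f 0 ≫ f = 0
        exact (Category.assoc _ _ _).symm.trans ((congrArg (· ≫ f) P.complex_d_comp_π_f_zero).trans Limits.zero_comp)
      | (n+1) =>
        show P.complex.d (n+2) (n+1) ≫ P.complex.d (n+1) n = 0
        simp)

@[simp] lemma glueComplex_X_zero : (glueComplex f P).X 0 = F := rfl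
@[simp] lemma glueComplex_X_succ (n : ℕ) : (glueComplex f P).X (n+1) = P.complex.X n := rfl
@[simp] lemma glueComplex_d_one_zero : (glueComplex f P).d 1 0 = P.π.f 0 ≫ f := by
  unfold glueComplex; simp [ChainComplex.of.d]
@[simp] lemma glueComplex_d_succ (n : ℕ) :
    (glueComplex f P).d (n+2) (n+1) = P.complex.d (n+1) n := by
  unfold glueComplex; simp [ChainComplex.of.d]

variable (hf : Function.Injective f) (hg : Function.Surjective g)
  (hfg : LinearMap.range f.hom = LinearMap.ker g.hom) [Projective F]

include hfg in
lemma glue_fg : f ≫ g = 0 := by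
  ext x
  have : f x ∈ LinearMap.ker g.hom := hfg ▸ LinearMap.mem_range_self f.hom x
  simpa using this

include hf hg hfg in
/-- Glue a projective resolution of `K` onto a short exact sequence `0 → K → F → N → 0`. -/
noncomputable def glueResolution : ProjectiveResolution N where
  complex := glueComplex f P
  projective := fun n => match n with
    | 0 => inferInstanceAs (Projective F)
    | (n+1) => P.projective n
  π := (ChainComplex.toSingle₀Equiv _ N).symm
    ⟨(g : (glueComplex f P).X 0 ⟶ N), by
      rw [glueComplex_d_one_zero]; exact (Category.assoc _ _ _).trans ((congrArg _ (glue_fg f g hfg)).trans Limits.comp_zero)⟩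
  quasiIso := ⟨fun n => by
    cases n with
    | zero =>
      rw [ChainComplex.quasiIsoAt₀_iff, ShortComplex.quasiIso_iff_of_zeros' _ rfl rfl rfl]
      have hzero : (glueComplex f P).d 1 0 ≫ (g : (glueComplex f P).X 0 ⟶ N) = 0 := by
        rw [glueComplex_d_one_zero]; exact (Category.assoc _ _ _).trans ((congrArg _ (glue_fg f g hfg)).trans Limits.comp_zero)
      have hex : (ShortComplex.mk ((glueComplex f P).d 1 0) g hzero).Exact := by
        rw [ShortComplex.moduleCat_exact_iff]
        intro x hx
        have hx' : x ∈ LinearMap.ker g.hom := hx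
        rw [← hfg] at hx'
        obtain ⟨k, hk⟩ := hx'
        have hπ : Function.Surjective (P.π.f 0) :=
          (ModuleCat.epi_iff_surjective _).1 inferInstance
        obtain ⟨y, hy⟩ := hπ k
        refine ⟨y, ?_⟩
        show (glueComplex f P).d 1 0 y = x
        rw [glueComplex_d_one_zero]
        show f (P.π.f 0 y) = x
        rw [hy, hk]
      have hepi : Epi (ShortComplex.mk ((glueComplex f P).d 1 0) g hzero).g :=
        (ModuleCat.epi_iff_surjective _).2 hg
      refine (ShortComplex.exact_and_epi_g_iff_of_iso ?_).2 ⟨hex, hepi⟩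
      refine ShortComplex.isoMk (Iso.refl ((glueComplex f P).X 1))
        (Iso.refl ((glueComplex f P).X 0))
        ((HomologicalComplex.singleObjXSelf (ComplexShape.down ℕ) 0 N).symm) ?_ ?_
      · exact (Category.id_comp _).trans (Category.comp_id _).symm
      · have h := ChainComplex.toSingle₀Equiv_symm_apply_f_zero
          (C := glueComplex f P) (X := N) g hzero
        exact (Category.id_comp _).trans (h.symm.trans (Category.comp_id _).symm)
    | succ n =>
      rw [quasiIsoAt_iff_exactAt']
      · -- exactness of glueComplex at n+1
        rw [HomologicalComplex.exactAt_iff' _ (n+2) (n+1) n (by simp) (by simp)]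
        rw [ShortComplex.moduleCat_exact_iff]
        cases n with
        | zero =>
          intro x hx
          have hx2 : ((glueComplex f P).d 1 0) x = 0 := hx
          rw [glueComplex_d_one_zero f P] at hx2
          have hx' : P.π.f 0 x = 0 := by
            apply hf
            exact hx2.trans (map_zero (ConcreteCategory.hom f)).symm
          have hP := P.exact₀
          rw [ShortComplex.moduleCat_exact_iff] at hP
          obtain ⟨y, hy⟩ := hP x hx'
          refine ⟨y, ?_⟩
          show ((glueComplex f P).d 2 1) y = x
          rw [glueComplex_d_succ f P 0]
          exact hy
        | succ n =>
          intro x hx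
          have hx2 : (P.complex.d (n+1) n) x = 0 := by
            rw [← glueComplex_d_succ f P n]; exact hx
          have hP := P.exact_succ n
          rw [ShortComplex.moduleCat_exact_iff] at hP
          obtain ⟨y, hy⟩ := hP x hx2
          refine ⟨y, ?_⟩
          show ((glueComplex f P).d (n+3) (n+2)) y = x
          rw [glueComplex_d_succ f P (n+1)]
          exact hy
      · apply ChainComplex.exactAt_succ_single_obj⟩

end Glue

section OneStepExt
variable {R : Type} [CommRing R]
variable {K F N : ModuleCat.{0} R} (f : K ⟶ F) (g : F ⟶ N)
variable (P : ProjectiveResolution K)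
variable (hf : Function.Injective f) (hg : Function.Surjective g)
  (hfg : LinearMap.range f.hom = LinearMap.ker g.hom) [Projective F]

include hf hg hfg in
lemma onestep_shift (Y : ModuleCat.{0} R) (m : ℕ) :
    Subsingleton (ExtGroup R N Y (m+2)) ↔ Subsingleton (ExtGroup R K Y (m+1)) := by
  let P : ProjectiveResolution K := ProjectiveResolution.of K
  let Q : ProjectiveResolution N := glueResolution f g P hf hg hfg
  rw [ext_subsingleton_iff N Y Q (m+1), ext_subsingleton_iff K Y P m]
  have hQX : ∀ n, Q.complex.X (n+1) = P.complex.X n := fun n => rfl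
  have hQd : ∀ n, Q.complex.d (n+2) (n+1) = P.complex.d (n+1) n :=
    fun n => glueComplex_d_succ f P n
  constructor
  · intro h φ hφ
    obtain ⟨ψ, hψ⟩ := h φ (by rw [hQd (m+1)]; exact hφ)
    exact ⟨ψ, by rw [← hQd m]; exact hψ⟩
  · intro h φ hφ
    obtain ⟨ψ, hψ⟩ := h φ (by rw [← hQd (m+1)]; exact hφ)
    exact ⟨ψ, by rw [hQd m]; exact hψ⟩

include hf hg hfg in
lemma onestep_lift (Y : ModuleCat.{0} R)
    (hss : Subsingleton (ExtGroup R N Y 1)) (φ₀ : K ⟶ Y) :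
    ∃ θ : F ⟶ Y, f ≫ θ = φ₀ := by
  let P : ProjectiveResolution K := ProjectiveResolution.of K
  let Q : ProjectiveResolution N := glueResolution f g P hf hg hfg
  rw [show (1 : ℕ) = 0 + 1 by rfl, ext_subsingleton_iff N Y Q 0] at hss
  obtain ⟨ψ, hψ⟩ := hss ((P.π.f 0 ≫ φ₀ : P.complex.X 0 ⟶ Y) : Q.complex.X 1 ⟶ Y)
    (by
      rw [show Q.complex.d 2 1 = P.complex.d 1 0 from glueComplex_d_succ f P 0]
      exact (Category.assoc _ _ _).symm.trans ((congrArg (· ≫ φ₀) P.complex_d_comp_π_f_zero).trans Limits.zero_comp))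
  refine ⟨ψ, ?_⟩
  have hd : Q.complex.d 1 0 = P.π.f 0 ≫ f := glueComplex_d_one_zero f P
  rw [hd] at hψ
  have := (ModuleCat.epi_iff_surjective (P.π.f 0)).1 inferInstance
  have hψ := (Category.assoc _ _ _).symm.trans hψ
  exact (cancel_epi (P.π.f 0)).1 hψ

end OneStepExt

section Main
variable {R : Type} [CommRing R]

lemma extShift {n : ℕ} {K M : ModuleCat.{0} R} (h : IsSyzygyOf R n K M)
    (Y : ModuleCat.{0} R) :
    ∀ m : ℕ, Subsingleton (ExtGroup R M Y (m+1+n)) ↔ Subsingleton (ExtGroup R K Y (m+1)) := by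
  induction h with
  | zero M => intro m; rfl
  | succ F hfree hfin f g hf hg hfg hN ih =>
    intro m
    letI : Module.Free R F := hfree
    haveI : Projective F := ModuleCat.projective_of_free (Module.Free.chooseBasis R F)
    rw [show ∀ q : ℕ, m+1+(q+1) = (m+1)+1+q from fun q => by omega, ih (m+1)]
    exact onestep_shift (ModuleCat.ofHom f) (ModuleCat.ofHom g) hf hg hfg Y m

lemma ext_vanish {M : ModuleCat.{0} R} {p : ℕ} (h : ProjDimLE R p M)
    (Y : ModuleCat.{0} R) (i : ℕ) (hi : p < i) : Subsingleton (ExtGroup R M Y i) := by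
  obtain ⟨K, hs, hfree⟩ := h
  obtain ⟨m, rfl⟩ : ∃ m, i = m+1+p := ⟨i - p - 1, by omega⟩
  rw [extShift hs Y m]
  letI : Module.Free R K := hfree
  haveI : Projective K := ModuleCat.projective_of_free (Module.Free.chooseBasis R K)
  rw [subsingleton_iff_isZero]
  exact isZero_Ext_succ_of_projective K Y m

lemma ext_nonvanish [IsNoetherianRing R] [IsLocalRing R] (M : ModuleCat.{0} R) (p : ℕ)
    (h : ProjDimLE R (p+1) M) (hnot : ¬ ProjDimLE R p M) :
    ¬ Subsingleton (ExtGroup R M (ModuleCat.of R (↑M × R)) (p+1)) := by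
  intro hss
  apply hnot
  obtain ⟨K, hs, hfreeK⟩ := h
  cases hs with
  | succ F hfree hfin f g hf hg hfg hN =>
    rename_i N
    letI : Module.Free R F := hfree
    letI : Module.Finite R F := hfin
    haveI : Projective F := ModuleCat.projective_of_free (Module.Free.chooseBasis R F)
    set Y := ModuleCat.of R (↑M × R) with hY
    have hss' : Subsingleton (ExtGroup R M Y (0+1+p)) := by
      rw [show 0+1+p = p+1 from by omega]; exact hss
    have h1 : Subsingleton (ExtGroup R N Y (0+1)) := (extShift hN Y 0).1 hss'
    have hlift := onestep_lift (N := N) (ModuleCat.ofHom f) (ModuleCat.ofHom g) hf hg hfg Y h1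
    -- build a retraction σ : F →ₗ[R] K of f
    letI : Module.Free R K := hfreeK
    haveI : IsNoetherian R F := inferInstance
    haveI : Module.Finite R K := Module.Finite.of_injective f hf
    haveI : Fintype (Module.Free.ChooseBasisIndex R K) := Module.Free.ChooseBasisIndex.fintype R K
    let b := Module.Free.chooseBasis R K
    have hρ : ∀ j, ∃ ρ : F →ₗ[R] R, ∀ k : K, ρ (f k) = b.coord j k := by
      intro j
      obtain ⟨θ, hθ⟩ := hlift (ModuleCat.ofHom ((LinearMap.inr R ↑M R) ∘ₗ (b.coord j)) : K ⟶ Y)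
      refine ⟨(LinearMap.snd R ↑M R) ∘ₗ θ.hom, fun k => ?_⟩
      have hk := congrArg (fun φ => φ.hom k) hθ
      have hk' : θ (f k) = (LinearMap.inr R ↑M R) ((b.coord j) k) := hk
      show (LinearMap.snd R ↑M R) (θ (f k)) = (b.coord j) k
      rw [hk']
      simp
    choose ρ hρ using hρ
    let σ : F →ₗ[R] K := ∑ j, LinearMap.smulRight (ρ j) (b j)
    have hσ : ∀ k, σ (f k) = k := by
      intro k
      have : σ (f k) = ∑ j, (b.coord j k) • b j := by
        simp [σ, LinearMap.sum_apply, LinearMap.smulRight_apply, hρ]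
      rw [this]
      exact b.sum_repr k
    -- build a section i : N →ₗ[R] F of g
    have hgf : ∀ k, g (f k) = 0 := by
      intro k
      have : f k ∈ LinearMap.ker g := hfg ▸ LinearMap.mem_range_self f k
      simpa using this
    let τ : F →ₗ[R] F := LinearMap.id - f ∘ₗ σ
    have hker : LinearMap.ker g ≤ LinearMap.ker τ := by
      intro x hx
      rw [← hfg] at hx
      obtain ⟨k, rfl⟩ := hx
      simp [τ, hσ k]
    let e := g.quotKerEquivOfSurjective hg
    let i : ↑N →ₗ[R] F := ((LinearMap.ker g).liftQ τ hker) ∘ₗ (e.symm : ↑N →ₗ[R] _)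
    have hgi : g ∘ₗ i = LinearMap.id := by
      ext n
      obtain ⟨x, rfl⟩ := hg n
      have hesymm : e.symm (g x) = Submodule.Quotient.mk x := by
        apply e.injective
        simp [e, LinearMap.quotKerEquivOfSurjective]
      simp only [LinearMap.comp_apply, LinearMap.id_apply, i, LinearEquiv.coe_coe, hesymm]
      have : ((LinearMap.ker g).liftQ τ hker) (Submodule.Quotient.mk x) = τ x :=
        Submodule.liftQ_apply _ _ _
      rw [this]
      simp [τ, map_sub, hgf]
    refine ⟨N, hN, ?_⟩
    haveI : Module.Finite R N := Module.Finite.of_surjective g hg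
    haveI : Module.Projective R N := Module.Projective.of_split i g hgi
    haveI : Module.FinitePresentation R N := Module.finitePresentation_of_projective R N
    exact Module.free_of_flat_of_isLocalRing

end Main


/-- If the Noetherian local ring `R` satisfies (GARC), then for every finitely generated
`R`-module `M` one has `pd_R M = sup { i | Ext_R^i(M, M ⊕ R) ≠ 0 }`. -/
theorem stmt_1 (R : Type) [CommRing R] [IsNoetherianRing R] [IsLocalRing R]
    (hGARC : ∀ M : ModuleCat.{0} R, Module.Finite R M →
      (∃ N : ℕ, ∀ i : ℕ, N < i →
        Subsingleton (ExtGroup R M (ModuleCat.of R (M × R)) i)) →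
      ∃ n : ℕ, ProjDimLE R n M) :
    ∀ M : ModuleCat.{0} R, Module.Finite R M →
      projDim R M = sSup {n : ℕ∞ | ∃ i : ℕ, n = i ∧
        ¬ Subsingleton (ExtGroup R M (ModuleCat.of R (M × R)) i)} := by
  intro M hM
  classical
  by_cases hfin : ∃ n : ℕ, ProjDimLE R n M
  · set p := Nat.find hfin with hpdef
    have hp : ProjDimLE R p M := Nat.find_spec hfin
    have hmin : ∀ k, ProjDimLE R k M → p ≤ k := fun k hk => Nat.find_min' hfin hk
    have hproj : projDim R M = (p : ℕ∞) := by
      apply le_antisymm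
      · exact sInf_le ⟨p, rfl, hp⟩
      · apply le_sInf
        rintro b ⟨k, rfl, hk⟩
        exact_mod_cast hmin k hk
    rw [hproj]
    apply le_antisymm
    · rcases Nat.eq_zero_or_pos p with h0 | h1
      · rw [h0]
        exact_mod_cast zero_le
      · obtain ⟨q, hq⟩ : ∃ q, p = q+1 := ⟨p-1, by omega⟩
        have hnot : ¬ ProjDimLE R q M := fun hq' => by
          have := hmin q hq'
          omega
        have hp' : ProjDimLE R (q+1) M := hq ▸ hp
        rw [hq]
        exact le_sSup ⟨q+1, rfl, ext_nonvanish M q hp' hnot⟩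
    · apply sSup_le
      rintro b ⟨i, rfl, hi⟩
      by_contra hlt
      push_neg at hlt
      have hpi : p < i := by exact_mod_cast hlt
      exact hi (ext_vanish hp _ i hpi)
  · have hproj : projDim R M = ⊤ := by
      rw [projDim, show {n : ℕ∞ | ∃ k : ℕ, n = k ∧ ProjDimLE R k M} = ∅ from ?_, sInf_empty]
      ext n
      simp only [Set.mem_setOf_eq, Set.mem_empty_iff_false, iff_false, not_exists]
      rintro k ⟨rfl, hk⟩
      exact hfin ⟨k, hk⟩
    rw [hproj]
    symm
    rw [sSup_eq_top]
    intro b hb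
    lift b to ℕ using hb.ne
    have hnE : ¬ (∃ N : ℕ, ∀ i : ℕ, N < i →
        Subsingleton (ExtGroup R M (ModuleCat.of R (M × R)) i)) :=
      fun hE => hfin (hGARC M hM hE)
    push_neg at hnE
    obtain ⟨i, hbi, hnsub⟩ := hnE b
    exact ⟨i, ⟨i, rfl, not_subsingleton_iff_nontrivial.2 hnsub⟩, by exact_mod_cast hbi⟩
end

section
/- Let R be a Cohen–Macaulay local ring and I an Ulrich ideal with reduction Q (a parameter ideal with I² = QI) such that μ(I) − dim R ≥ 1. Then I/Q is a free R/I-module of rank μ(I) − dim R. -/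
open CategoryTheory

/-- The quotient module `A/B` for submodules `B ≤ A` of `R`. -/
abbrev subQuot (R : Type) [CommRing R] {A B : Submodule R R} (h : B ≤ A) : Type :=
  (↥A) ⧸ LinearMap.range (Submodule.inclusion h)

open RingTheory.Sequence IsLocalRing Submodule

lemma aux_smul_top (R : Type) [CommRing R] (J : Ideal R) :
    (J • (⊤ : Submodule R R) : Submodule R R) = J := by
  apply le_antisymm
  · exact Submodule.smul_le.2 fun a ha b _ => by
      simpa [smul_eq_mul] using J.mul_mem_right b ha
  · intro x hx
    simpa using Submodule.smul_mem_smul hx (Submodule.mem_top (x := (1:R)))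

lemma aux_indep (R : Type) [CommRing R] [IsNoetherianRing R] [IsLocalRing R]
    {n : ℕ} {I : Ideal R} (hIle : I ≤ maximalIdeal R) {q : Fin n → R}
    (hreg : RingTheory.Sequence.IsRegular R (List.ofFn q))
    (hQI : Ideal.span (Set.range q) ≤ I)
    (hred : I ^ 2 = Ideal.span (Set.range q) * I) :
    ∀ b : Fin n → R, (∑ i, b i * q i) ∈ maximalIdeal R * I →
      ∀ i, b i ∈ maximalIdeal R := by
  intro b hb i₀
  by_contra hbi
  have hqm : ∀ j, q j ∈ maximalIdeal R := fun j =>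
    hIle (hQI (Ideal.subset_span ⟨j, rfl⟩))
  have hqI : ∀ j, q j ∈ I := fun j => hQI (Ideal.subset_span ⟨j, rfl⟩)
  obtain ⟨u, hu⟩ : IsUnit (b i₀) := by
    by_contra h
    exact hbi (IsLocalRing.mem_maximalIdeal _ |>.2 h)
  -- the list of the other elements
  set L : List (Fin n) := (Finset.univ.erase i₀).toList with hL
  set l₁ : List R := L.map q with hl₁
  set J : Ideal R := Ideal.ofList l₁ with hJ
  have hJle : J ≤ maximalIdeal R := by
    rw [hJ, Ideal.span_le]
    rintro x hx
    obtain ⟨j, -, rfl⟩ := List.mem_map.1 hx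
    exact hqm j
  have hqJ : ∀ j, j ≠ i₀ → q j ∈ J := by
    intro j hj
    refine Ideal.subset_span ?_
    exact List.mem_map.2 ⟨j, by simp [hL, hj], rfl⟩
  -- permutation
  have hperm : (List.ofFn q).Perm (l₁ ++ [q i₀]) := by
    rw [List.ofFn_eq_map, show l₁ ++ [q i₀] = (L ++ [i₀]).map q by simp [hl₁]]
    refine List.Perm.map q ?_
    have h1 : (L ++ [i₀]).Perm (i₀ :: L) := List.perm_append_singleton _ _
    have h2 : (i₀ :: L).Perm ((insert i₀ (Finset.univ.erase i₀)).toList) :=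
      (Finset.toList_insert (Finset.notMem_erase _ _)).symm
    have h3 : insert i₀ (Finset.univ.erase i₀) = Finset.univ :=
      Finset.insert_erase (Finset.mem_univ _)
    have h4 : (List.finRange n).Perm (Finset.univ.toList (α := Fin n)) := by
      refine List.perm_of_nodup_nodup_toFinset_eq (List.nodup_finRange n)
        (Finset.nodup_toList _) ?_
      rw [List.toFinset_finRange, Finset.toList_toFinset]
    refine h4.trans ?_
    rw [← h3]
    exact (h1.trans h2).symm
  -- q i₀ ∈ J ⊔ m * I
  have hsum : b i₀ * q i₀ ∈ J ⊔ maximalIdeal R * I := by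
    have : ∑ i, b i * q i = b i₀ * q i₀ + ∑ i ∈ Finset.univ.erase i₀, b i * q i :=
      (Finset.add_sum_erase _ _ (Finset.mem_univ i₀)).symm
    have hT : ∑ i ∈ Finset.univ.erase i₀, b i * q i ∈ J := by
      refine Ideal.sum_mem _ fun j hj => ?_
      exact J.mul_mem_left _ (hqJ j (Finset.ne_of_mem_erase hj))
    have : b i₀ * q i₀ = (∑ i, b i * q i) - ∑ i ∈ Finset.univ.erase i₀, b i * q i := by
      rw [this]; ring
    rw [this]
    exact sub_mem (Ideal.mem_sup_right hb) (Ideal.mem_sup_left hT)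
  have hqi₀ : q i₀ ∈ J ⊔ maximalIdeal R * I := by
    have : q i₀ = ↑u⁻¹ * (b i₀ * q i₀) := by
      rw [← hu, ← mul_assoc, Units.inv_mul, one_mul]
    rw [this]
    exact Ideal.mul_mem_left _ _ hsum
  have hQle : Ideal.span (Set.range q) ≤ J ⊔ maximalIdeal R * I := by
    rw [Ideal.span_le]
    rintro x ⟨j, rfl⟩
    by_cases hj : j = i₀
    · exact hj ▸ hqi₀
    · exact Ideal.mem_sup_left (hqJ j hj)
  have hI2 : I ^ 2 ≤ J ⊔ maximalIdeal R • I ^ 2 := by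
    calc I ^ 2 = Ideal.span (Set.range q) * I := hred
    _ ≤ (J ⊔ maximalIdeal R * I) * I := Ideal.mul_mono_left hQle
    _ = J * I ⊔ maximalIdeal R * I * I := by rw [Ideal.sup_mul]
    _ ≤ J ⊔ maximalIdeal R • I ^ 2 := by
        refine sup_le_sup Ideal.mul_le_left ?_
        rw [smul_eq_mul, pow_two, mul_assoc]
  have hNak : I ^ 2 ≤ J :=
    Submodule.le_of_le_smul_of_le_jacobson_bot (IsNoetherian.noetherian _)
      (IsLocalRing.maximalIdeal_le_jacobson ⊥) hI2
  have hsq : q i₀ * q i₀ ∈ J := by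
    refine hNak ?_
    rw [pow_two]
    exact Ideal.mul_mem_mul (hqI i₀) (hqI i₀)
  -- regularity of permuted sequence
  have hreg' := IsLocalRing.isRegular_of_perm hreg hperm
  have hw := hreg'.toIsWeaklyRegular
  rw [RingTheory.Sequence.isWeaklyRegular_append_iff] at hw
  have hw2 := hw.2
  rw [RingTheory.Sequence.isWeaklyRegular_singleton_iff] at hw2
  -- hw2 : IsSMulRegular (R ⧸ Ideal.ofList l₁ • ⊤) (q i₀)
  have hker : ∀ x : R, (Submodule.Quotient.mk x : R ⧸ (J • ⊤ : Submodule R R)) = 0 ↔ x ∈ J := by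
    intro x
    rw [Submodule.Quotient.mk_eq_zero, aux_smul_top]
  have h1 : (Submodule.Quotient.mk (q i₀) : R ⧸ (J • ⊤ : Submodule R R)) = 0 := by
    refine hw2 ?_
    show q i₀ • (Submodule.Quotient.mk (q i₀) : R ⧸ (J • ⊤ : Submodule R R)) = q i₀ • 0
    rw [smul_zero, ← Submodule.Quotient.mk_smul]
    exact (hker _).2 (by simpa [smul_eq_mul] using hsq)
  have h2 : (Submodule.Quotient.mk (1:R) : R ⧸ (J • ⊤ : Submodule R R)) = 0 := by
    refine hw2 ?_
    show q i₀ • (Submodule.Quotient.mk (1:R) : R ⧸ (J • ⊤ : Submodule R R)) = q i₀ • 0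
    rw [smul_zero, ← Submodule.Quotient.mk_smul]
    have he : q i₀ • (1:R) = q i₀ := by simp
    rw [he]
    exact h1
  rw [hker] at h2
  have : maximalIdeal R = ⊤ := Ideal.eq_top_iff_one _ |>.2 (hJle h2)
  exact (Ideal.IsMaximal.ne_top inferInstance) this


lemma aux_free (A : Type) [CommRing A] [IsLocalRing A] (K : Type) [Field K]
    (π : A →+* K) (hπ : Function.Surjective π)
    (hker : ∀ a : A, π a = 0 → a ∈ maximalIdeal A)
    {c n : ℕ} (hn : n ≤ c) (v : Fin n → (Fin c → A))
    (hind : LinearIndependent K (fun i => π ∘ v i)) :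
    Nonempty (((Fin c → A) ⧸ Submodule.span A (Set.range v)) ≃ₗ[A] (Fin (c - n) → A)) := by
  classical
  set vb : Fin n → (Fin c → K) := fun i => π ∘ v i with hvb
  set sp : Submodule K (Fin c → K) := Submodule.span K (Set.range vb) with hsp
  obtain ⟨U, hU⟩ := Submodule.exists_isCompl sp
  have hrank : Module.finrank K sp + Module.finrank K U = c := by
    rw [Submodule.finrank_add_eq_of_isCompl hU, Module.finrank_fin_fun]
  have hspn : Module.finrank K sp = n := by
    rw [hsp, finrank_span_eq_card hind, Fintype.card_fin]
  have hUrank : Module.finrank K U = c - n := by omega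
  -- spanning family of U
  set wb : Fin (c - n) → (Fin c → K) :=
    fun j => ((Module.finBasis K U) (Fin.cast hUrank.symm j) : Fin c → K) with hwb
  have hwbU : Submodule.span K (Set.range wb) = U := by
    have h1 : Set.range wb = Subtype.val '' Set.range ((Module.finBasis K U) ∘ (Fin.cast hUrank.symm)) := by
      rw [hwb]; ext x; simp [Function.comp]
    have h2 : Set.range ((Module.finBasis K U) ∘ (Fin.cast hUrank.symm)) =
        Set.range (Module.finBasis K U) := by
      apply Function.Surjective.range_comp
      exact (finCongr hUrank.symm).surjective
    have h3 : Subtype.val '' Set.range ⇑(Module.finBasis K ↥U) =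
        ⇑U.subtype '' Set.range ⇑(Module.finBasis K ↥U) := rfl
    rw [h1, h2, h3, ← Submodule.map_span, Module.Basis.span_eq, Submodule.map_top,
      Submodule.range_subtype]
  -- lifts
  have hlift : ∀ z : Fin c → K, ∃ y : Fin c → A, ∀ i, π (y i) = z i := by
    intro z
    choose y hy using fun i => hπ (z i)
    exact ⟨y, hy⟩
  choose w hw using fun j => hlift (wb j)
  set u : Fin n ⊕ Fin (c - n) → (Fin c → A) := Sum.elim v w with hu
  -- span of u is everything, by Nakayama
  have hspan : Submodule.span A (Set.range u) = ⊤ := by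
    have hle : (⊤ : Submodule A (Fin c → A)) ≤
        Submodule.span A (Set.range u) ⊔ (maximalIdeal A) • ⊤ := by
      intro x _
      have hxbar : (fun i => π (x i)) ∈ sp ⊔ U := by
        rw [hU.sup_eq_top]; trivial
      obtain ⟨s, hs, t, ht, hst⟩ := Submodule.mem_sup.1 hxbar
      obtain ⟨b, hb⟩ := (mem_span_range_iff_exists_fun K).1 hs
      have htw : t ∈ Submodule.span K (Set.range wb) := by rw [hwbU]; exact ht
      obtain ⟨d, hd⟩ := (mem_span_range_iff_exists_fun K).1 htw
      choose bl hbl using fun i => hπ (b i)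
      choose dl hdl using fun j => hπ (d j)
      set y : Fin c → A := (∑ i, bl i • v i) + (∑ j, dl j • w j) with hy
      have hymem : y ∈ Submodule.span A (Set.range u) := by
        refine Submodule.add_mem _ (Submodule.sum_mem _ fun i _ => ?_)
          (Submodule.sum_mem _ fun j _ => ?_)
        · exact Submodule.smul_mem _ _ (Submodule.subset_span ⟨Sum.inl i, rfl⟩)
        · exact Submodule.smul_mem _ _ (Submodule.subset_span ⟨Sum.inr j, rfl⟩)
      have hxy : ∀ i, π ((x - y) i) = 0 := by
        intro i
        have h1 : π (y i) = s i + t i := by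
          rw [hy]
          simp only [Pi.add_apply, Finset.sum_apply, Pi.smul_apply, smul_eq_mul]
          rw [map_add, map_sum, map_sum]
          simp only [map_mul]
          have e1 : ∑ i', π (bl i') * π (v i' i) = s i := by
            rw [← hb]; simp only [Finset.sum_apply, Pi.smul_apply, smul_eq_mul]
            exact Finset.sum_congr rfl fun i' _ => by rw [hbl]; rfl
          have e2 : ∑ j, π (dl j) * π (w j i) = t i := by
            rw [← hd]; simp only [Finset.sum_apply, Pi.smul_apply, smul_eq_mul]
            exact Finset.sum_congr rfl fun j _ => by rw [hdl, hw]
          rw [e1, e2]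
        have h2 : π (x i) = s i + t i := by
          simpa using (congrFun hst i).symm
        simp [Pi.sub_apply, map_sub, h1, h2]
      have hmem2 : x - y ∈ (maximalIdeal A) • (⊤ : Submodule A (Fin c → A)) := by
        have : x - y = ∑ i, Pi.single i ((x - y) i) := (Finset.univ_sum_single _).symm
        rw [this]
        refine Submodule.sum_mem _ fun i _ => ?_
        have h3 : Pi.single i ((x - y) i) = (x - y) i • (Pi.single i (1 : A) : Fin c → A) := by
          rw [← Pi.single_smul, smul_eq_mul, mul_one]
        rw [h3]
        exact Submodule.smul_mem_smul (hker _ (hxy i)) Submodule.mem_top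
      have : x = y + (x - y) := by ring
      rw [this]
      exact Submodule.add_mem _ (Submodule.mem_sup_left hymem) (Submodule.mem_sup_right hmem2)
    have := Submodule.le_of_le_smul_of_le_jacobson_bot (Module.finite_def.mp inferInstance)
      (IsLocalRing.maximalIdeal_le_jacobson ⊥) hle
    exact le_antisymm le_top this
  -- The big map
  set Tv : (Fin n → A) →ₗ[A] (Fin c → A) := Fintype.linearCombination A v with hTv
  set Tw : (Fin (c - n) → A) →ₗ[A] (Fin c → A) := Fintype.linearCombination A w with hTw
  set T : ((Fin n → A) × (Fin (c - n) → A)) →ₗ[A] (Fin c → A) := Tv.coprod Tw with hT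
  have hTsurj : Function.Surjective T := by
    rw [← LinearMap.range_eq_top, hT, LinearMap.range_coprod, hTv, hTw,
      Fintype.range_linearCombination, Fintype.range_linearCombination,
      ← Submodule.span_union, ← Set.Sum.elim_range]
    exact hspan
  have hTinj : Function.Injective T := by
    have hnc : n + (c - n) = c := by omega
    set P : (Fin c → A) ≃ₗ[A] ((Fin n → A) × (Fin (c - n) → A)) :=
      (LinearEquiv.funCongrLeft A A (finSumFinEquiv.trans (finCongr hnc))).trans
        (LinearEquiv.sumArrowLequivProdArrow (Fin n) (Fin (c - n)) A A) with hP
    have hsurj2 : Function.Surjective (T ∘ₗ (P : (Fin c → A) →ₗ[A] _)) :=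
      hTsurj.comp P.surjective
    have hinj2 := OrzechProperty.injective_of_surjective_endomorphism _ hsurj2
    have heq : ⇑T = ⇑(T ∘ₗ (P : (Fin c → A) →ₗ[A] _)) ∘ ⇑P.symm := by
      funext x
      simp
    rw [heq]
    exact Function.Injective.comp hinj2 P.symm.injective
  set E₁ := LinearEquiv.ofBijective T ⟨hTinj, hTsurj⟩ with hE₁
  have hmap : (LinearMap.ker (LinearMap.snd A (Fin n → A) (Fin (c - n) → A))).map
      (E₁ : ((Fin n → A) × (Fin (c - n) → A)) →ₗ[A] (Fin c → A)) = Submodule.span A (Set.range v) := by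
    apply le_antisymm
    · rintro _ ⟨⟨x, y⟩, hxy, rfl⟩
      have hy0 : y = 0 := hxy
      show E₁ (x, y) ∈ Submodule.span A (Set.range v)
      have heq : E₁ (x, y) = Tv x := by
        show T (x, y) = Tv x
        rw [hT, LinearMap.coprod_apply, hy0, map_zero, add_zero]
      rw [heq]
      have hm : Tv x ∈ LinearMap.range Tv := ⟨x, rfl⟩
      rwa [hTv, Fintype.range_linearCombination] at hm
    · rw [Submodule.span_le]
      rintro _ ⟨i, rfl⟩
      refine ⟨(Pi.single i 1, 0), ?_, ?_⟩
      · simp [LinearMap.mem_ker]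
      · show T (Pi.single i 1, 0) = v i
        rw [hT, LinearMap.coprod_apply, map_zero, add_zero, hTv,
          Fintype.linearCombination_apply_single]
        exact one_smul _ _
  exact ⟨((Submodule.Quotient.equiv _ _ E₁ hmap).symm.trans
    (LinearMap.quotKerEquivOfSurjective _ LinearMap.snd_surjective)).symm.symm⟩

set_option maxHeartbeats 2000000 in
/-- If `I` is an Ulrich ideal of a Cohen–Macaulay local ring `R` with reduction the
parameter ideal `Q` (so `I² = QI`) and `μ(I) − dim R ≥ 1`, then `I/Q` is a free
`R/I`-module of rank `μ(I) − dim R`. -/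
theorem stmt_18 (R : Type) [CommRing R] [IsNoetherianRing R] [IsLocalRing R]
    (n : ℕ) (hdim : ringKrullDim R = n)
    (hCM : ∃ f : Fin n → R, (∀ j, f j ∈ IsLocalRing.maximalIdeal R) ∧
      RingTheory.Sequence.IsRegular R (List.ofFn f))
    (I : Ideal R) (hIle : I ≤ IsLocalRing.maximalIdeal R)
    (hIprim : IsLocalRing.maximalIdeal R ≤ I.radical)
    (q : Fin n → R) (hreg : RingTheory.Sequence.IsRegular R (List.ofFn q))
    (hQprim : IsLocalRing.maximalIdeal R ≤ (Ideal.span (Set.range q)).radical)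
    (hQI : Ideal.span (Set.range q) ≤ I)
    (hred : I ^ 2 = Ideal.span (Set.range q) * I)
    (hfree : ∃ r : ℕ, Nonempty
      (subQuot R (Ideal.pow_le_self (two_ne_zero) : I ^ 2 ≤ I) ≃ₗ[R]
        (Fin r → R ⧸ I)))
    (c : ℕ) (hc : c = sInf {k : ℕ | ∃ g : Fin k → R, Ideal.span (Set.range g) = I})
    (hcn : 1 ≤ c - n) :
    Nonempty (subQuot R hQI ≃ₗ[R] (Fin (c - n) → R ⧸ I)) := by
  classical
  obtain ⟨r, ⟨e₀⟩⟩ := hfree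
  -- basic setup
  have hItop : I ≠ ⊤ := fun h => Ideal.IsMaximal.ne_top
    (inferInstance : (maximalIdeal R).IsMaximal) (top_le_iff.1 (h ▸ hIle))
  have : Nontrivial (R ⧸ I) := Ideal.Quotient.nontrivial_iff.mpr hItop
  have : IsLocalRing (R ⧸ I) :=
    IsLocalRing.of_surjective' (Ideal.Quotient.mk I) Ideal.Quotient.mk_surjective
  have : StrongRankCondition (R ⧸ I) := inferInstance
  have hqI : ∀ i, q i ∈ I := fun i => hQI (Ideal.subset_span ⟨i, rfl⟩)
  have hqm : ∀ i, q i ∈ maximalIdeal R := fun i => hIle (hqI i)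
  have hQm : Ideal.span (Set.range q) ≤ maximalIdeal R := le_trans hQI hIle
  have hI2mI : I ^ 2 ≤ maximalIdeal R * I := by
    rw [hred]; exact Ideal.mul_mono_left hQm
  have hI2Q : I ^ 2 ≤ Ideal.span (Set.range q) := by
    rw [hred]; exact Ideal.mul_le_left
  set h2 : I ^ 2 ≤ I := Ideal.pow_le_self (two_ne_zero) with hh2
  set F := subQuot R h2 with hF
  set ν : ↥I →ₗ[R] F := (LinearMap.range (Submodule.inclusion h2)).mkQ with hν
  have hνsurj : Function.Surjective ν := Submodule.mkQ_surjective _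
  have hmem2 : ∀ y : ↥I, y ∈ LinearMap.range (Submodule.inclusion h2) ↔ (y : R) ∈ I ^ 2 := by
    intro y
    constructor
    · rintro ⟨z, rfl⟩; exact z.2
    · intro hy; exact ⟨⟨(y : R), hy⟩, rfl⟩
  have hmemQ : ∀ y : ↥I, y ∈ LinearMap.range (Submodule.inclusion hQI) ↔
      (y : R) ∈ Ideal.span (Set.range q) := by
    intro y
    constructor
    · rintro ⟨z, rfl⟩; exact z.2
    · intro hy; exact ⟨⟨(y : R), hy⟩, rfl⟩
  have hkerν : LinearMap.ker ν = LinearMap.range (Submodule.inclusion h2) :=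
    Submodule.ker_mkQ _
  -- smul through the quotient map
  have hsm : ∀ (ρ : R) (a : R ⧸ I), ρ • a = Ideal.Quotient.mk I ρ * a := by
    intro ρ a
    obtain ⟨b, rfl⟩ := Ideal.Quotient.mk_surjective a
    rw [← map_mul]
    rfl
  -- c ≤ r
  have hcr : c ≤ r := by
    choose y hy using fun i : Fin r => hνsurj (e₀.symm (Pi.single i 1))
    set sp' : Ideal R := Ideal.span (Set.range fun i => ((y i : R))) with hsp'
    have hsple : sp' ≤ I := by
      rw [hsp', Ideal.span_le]
      rintro x ⟨i, rfl⟩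
      exact (y i).2
    have hstep : I ≤ sp' ⊔ maximalIdeal R • I := by
      intro x hx
      set z := e₀ (ν ⟨x, hx⟩) with hz
      choose ρc hρc using fun i => Ideal.Quotient.mk_surjective (z i)
      have hsingle : ∀ i, ρc i • (Pi.single i (1 : R ⧸ I) : Fin r → R ⧸ I) =
          Pi.single i (z i) := by
        intro i
        rw [← Pi.single_smul, hsm, mul_one, hρc]
      have hzeq : e₀ (ν (∑ i, ρc i • y i)) = z := by
        rw [map_sum, map_sum]
        simp only [map_smul, hy, LinearEquiv.apply_symm_apply]
        rw [Finset.sum_congr rfl fun i _ => hsingle i]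
        exact Finset.univ_sum_single z
      have hker : (⟨x, hx⟩ : ↥I) - ∑ i, ρc i • y i ∈ LinearMap.ker ν := by
        rw [LinearMap.mem_ker, map_sub, sub_eq_zero]
        exact e₀.injective (by rw [hzeq])
      have hv2 : ((⟨x, hx⟩ : ↥I) - ∑ i, ρc i • y i : ↥I).val ∈ I ^ 2 := by
        rw [hkerν] at hker
        exact (hmem2 _).1 hker
      have hxe : x = (∑ i, ρc i • (y i : R)) +
          ((⟨x, hx⟩ : ↥I) - ∑ i, ρc i • y i : ↥I).val := by
        push_cast
        ring
      rw [hxe]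
      refine Submodule.add_mem _ (Ideal.mem_sup_left ?_) (Ideal.mem_sup_right ?_)
      · exact Submodule.sum_mem _ fun i _ =>
          Submodule.smul_mem _ _ (Ideal.subset_span ⟨i, rfl⟩)
      · rw [Ideal.smul_eq_mul]
        exact hI2mI hv2
    have hIs : I ≤ sp' :=
      Submodule.le_of_le_smul_of_le_jacobson_bot (IsNoetherian.noetherian I)
        (IsLocalRing.maximalIdeal_le_jacobson ⊥) hstep
    have : Ideal.span (Set.range fun i => ((y i : R))) = I := le_antisymm hsple hIs
    rw [hc]
    exact Nat.sInf_le ⟨_, this⟩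
  -- r ≤ c
  have hrc : r ≤ c := by
    have hne : {k : ℕ | ∃ g : Fin k → R, Ideal.span (Set.range g) = I}.Nonempty := by
      obtain ⟨n₀, g₀, hg₀⟩ :=
        Submodule.fg_iff_exists_fin_generating_family.1 (IsNoetherian.noetherian I)
      exact ⟨n₀, g₀, hg₀⟩
    obtain ⟨g, hg⟩ : ∃ g : Fin c → R, Ideal.span (Set.range g) = I := by
      have := Nat.sInf_mem hne
      rwa [← hc] at this
    have hgI : ∀ i, g i ∈ I := fun i => hg ▸ Ideal.subset_span ⟨i, rfl⟩
    set u' : Fin c → (Fin r → R ⧸ I) := fun i => e₀ (ν ⟨g i, hgI i⟩) with hu'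
    set ψ : (Fin c → R ⧸ I) →ₗ[R ⧸ I] (Fin r → R ⧸ I) :=
      Fintype.linearCombination (R ⧸ I) u' with hψ
    have hψs : Function.Surjective ψ := by
      rw [← LinearMap.range_eq_top, hψ, Fintype.range_linearCombination, eq_top_iff]
      rintro z -
      obtain ⟨ξ, hξ⟩ := (e₀.surjective.comp hνsurj) z
      have hξI : (ξ : R) ∈ Ideal.span (Set.range g) := by rw [hg]; exact ξ.2
      obtain ⟨ρc, hρc⟩ := (mem_span_range_iff_exists_fun R).1 hξI
      have hξeq : ξ = ∑ i, ρc i • (⟨g i, hgI i⟩ : ↥I) := by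
        apply Subtype.ext
        push_cast
        exact hρc.symm
      have hzeq : z = ∑ i, ρc i • u' i := by
        rw [← hξ, Function.comp_apply, hξeq, map_sum, map_sum]
        simp only [map_smul]
        rfl
      rw [hzeq]
      refine Submodule.sum_mem _ fun i _ => ?_
      have : ρc i • u' i = (Ideal.Quotient.mk I (ρc i)) • u' i := by
        funext j
        rw [Pi.smul_apply, Pi.smul_apply, hsm, smul_eq_mul]
      rw [this]
      exact Submodule.smul_mem _ _ (Submodule.subset_span ⟨i, rfl⟩)
    have hrank := LinearMap.rank_le_of_surjective ψ hψs
    rw [rank_fin_fun, rank_fin_fun] at hrank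
    exact_mod_cast hrank
  have hrceq : r = c := le_antisymm hrc hcr
  set e : F ≃ₗ[R] (Fin c → R ⧸ I) :=
    e₀.trans (LinearEquiv.funCongrLeft R (R ⧸ I) (finCongr hrceq.symm)) with he
  set ρmap : ↥I →ₗ[R] (Fin c → R ⧸ I) := (e : F →ₗ[R] _) ∘ₗ ν with hρmap
  have hρsurj : Function.Surjective ρmap := e.surjective.comp hνsurj
  have hkerρ : ∀ y : ↥I, ρmap y = 0 ↔ (y : R) ∈ I ^ 2 := by
    intro y
    have h1 : ρmap y = 0 ↔ ν y = 0 := by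
      rw [hρmap]; simp
    rw [h1, ← LinearMap.mem_ker, hkerν, hmem2]
  set qel : Fin n → ↥I := fun i => ⟨q i, hqI i⟩ with hqel
  set v : Fin n → (Fin c → R ⧸ I) := fun i => ρmap (qel i) with hv
  -- residue field
  set K := IsLocalRing.ResidueField R with hK
  set π : (R ⧸ I) →+* K := Ideal.Quotient.lift I (IsLocalRing.residue R)
    (fun a ha => Ideal.Quotient.eq_zero_iff_mem.2 (hIle ha)) with hπ
  have hπmk : ∀ b : R, π (Ideal.Quotient.mk I b) = IsLocalRing.residue R b := fun b => rfl
  have hπs : Function.Surjective π := by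
    intro x
    obtain ⟨b, rfl⟩ := Ideal.Quotient.mk_surjective (I := maximalIdeal R) x
    exact ⟨Ideal.Quotient.mk I b, rfl⟩
  have hπker : ∀ a : R ⧸ I, π a = 0 → a ∈ maximalIdeal (R ⧸ I) := by
    intro a ha
    obtain ⟨b, rfl⟩ := Ideal.Quotient.mk_surjective a
    rw [hπmk] at ha
    have hbm : b ∈ maximalIdeal R := Ideal.Quotient.eq_zero_iff_mem.1 ha
    rw [IsLocalRing.mem_maximalIdeal, mem_nonunits_iff]
    intro hun
    obtain ⟨u, hu⟩ := hun
    obtain ⟨s, hs⟩ := Ideal.Quotient.mk_surjective (↑u⁻¹ : R ⧸ I)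
    have h1 : Ideal.Quotient.mk I (b * s) = 1 := by
      rw [map_mul, ← hu, hs, Units.mul_inv]
    have h2 : b * s - 1 ∈ I := by
      rw [← Ideal.Quotient.eq_zero_iff_mem, map_sub, h1, map_one, sub_self]
    have h3 : (1 : R) ∈ maximalIdeal R := by
      have : (1 : R) = b * s - (b * s - 1) := by ring
      rw [this]
      exact Submodule.sub_mem _ ((maximalIdeal R).mul_mem_right s hbm) (hIle h2)
    exact Ideal.IsMaximal.ne_top (inferInstance : (maximalIdeal R).IsMaximal)
      ((Ideal.eq_top_iff_one _).2 h3)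
  -- linear independence of residues
  have hindK : LinearIndependent K (fun i => ⇑π ∘ v i) := by
    rw [Fintype.linearIndependent_iff]
    intro gc hsum i0
    choose bh hbh using fun i =>
      Ideal.Quotient.mk_surjective (I := maximalIdeal R) (gc i)
    set ξ : ↥I := ∑ i, bh i • qel i with hξ
    have hξval : (ξ : R) = ∑ i, bh i * q i := by
      rw [hξ]
      push_cast
      exact Finset.sum_congr rfl fun i _ => rfl
    have hcoord : ∀ j, π ((ρmap ξ) j) = 0 := by
      intro j
      have h1 : (ρmap ξ) j = ∑ i, Ideal.Quotient.mk I (bh i) * (v i j) := by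
        rw [hξ, map_sum, Finset.sum_apply]
        refine Finset.sum_congr rfl fun i _ => ?_
        rw [map_smul, Pi.smul_apply, hsm, hv]
      rw [h1, map_sum]
      have hbh' : ∀ i, IsLocalRing.residue R (bh i) = gc i := hbh
      have h2 : ∀ i, π (Ideal.Quotient.mk I (bh i) * (v i j)) = gc i * π (v i j) := by
        intro i
        rw [map_mul, hπmk, hbh']
      have h3 := congrFun hsum j
      simp only [Finset.sum_apply, Pi.smul_apply, Pi.zero_apply, Function.comp_apply,
        smul_eq_mul] at h3
      rw [Finset.sum_congr rfl fun i _ => h2 i]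
      exact h3
    have hb2 : ρmap ξ ∈ maximalIdeal R • (⊤ : Submodule R (Fin c → R ⧸ I)) := by
      have hdec : ρmap ξ = ∑ j, Pi.single j ((ρmap ξ) j) := (Finset.univ_sum_single _).symm
      rw [hdec]
      refine Submodule.sum_mem _ fun j _ => ?_
      obtain ⟨b, hb⟩ := Ideal.Quotient.mk_surjective ((ρmap ξ) j)
      have hbm : b ∈ maximalIdeal R := by
        have : IsLocalRing.residue R b = 0 := by
          rw [← hπmk, hb]
          exact hcoord j
        exact Ideal.Quotient.eq_zero_iff_mem.1 this
      have hsingle : Pi.single j ((ρmap ξ) j) =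
          b • (Pi.single j (1 : R ⧸ I) : Fin c → R ⧸ I) := by
        rw [← Pi.single_smul, hsm, mul_one, hb]
      rw [hsingle]
      exact Submodule.smul_mem_smul hbm Submodule.mem_top
    have hb3 : ν ξ ∈ maximalIdeal R • (⊤ : Submodule R F) := by
      have hmap : Submodule.map (e.symm : (Fin c → R ⧸ I) →ₗ[R] F)
          (maximalIdeal R • ⊤) = maximalIdeal R • ⊤ := by
        rw [Submodule.map_smul'', Submodule.map_top, LinearEquiv.range]
      rw [← hmap]
      refine ⟨ρmap ξ, hb2, ?_⟩
      rw [hρmap]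
      simp
    have hb4 : ν ξ ∈ Submodule.map ν (maximalIdeal R • (⊤ : Submodule R ↥I)) := by
      rw [Submodule.map_smul'', Submodule.map_top, hν, Submodule.range_mkQ]
      rw [hν] at hb3
      exact hb3
    obtain ⟨η, hη, hηξ⟩ := hb4
    have hker : ξ - η ∈ LinearMap.ker ν := by
      rw [LinearMap.mem_ker, map_sub, hηξ, sub_self]
    have hηI : (η : R) ∈ maximalIdeal R * I := by
      have hmem : (η : R) ∈ Submodule.map I.subtype (maximalIdeal R • ⊤) := ⟨η, hη, rfl⟩
      rwa [Submodule.map_smul'', Submodule.map_subtype_top, Ideal.smul_eq_mul] at hmem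
    have hdiff : (ξ : R) - (η : R) ∈ I ^ 2 := by
      rw [hkerν] at hker
      have := (hmem2 _).1 hker
      push_cast at this
      exact this
    have hximI : (∑ i, bh i * q i) ∈ maximalIdeal R * I := by
      rw [← hξval, show ((ξ : R)) = (η : R) + ((ξ : R) - (η : R)) by ring]
      exact Submodule.add_mem _ hηI (hI2mI hdiff)
    have hbm := aux_indep R hIle hreg hQI hred bh hximI
    rw [← hbh i0]
    exact Ideal.Quotient.eq_zero_iff_mem.2 (hbm i0)
  have hnc : n ≤ c := by omega
  obtain ⟨Efree⟩ := aux_free (R ⧸ I) K π hπs hπker hnc v hindK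
  -- the final assembly
  set S : Submodule (R ⧸ I) (Fin c → R ⧸ I) := Submodule.span (R ⧸ I) (Set.range v) with hS
  set Φ : ↥I →ₗ[R] ((Fin c → R ⧸ I) ⧸ S) := (S.mkQ.restrictScalars R) ∘ₗ ρmap with hΦ
  have hΦsurj : Function.Surjective Φ := (Submodule.mkQ_surjective S).comp hρsurj
  have hΦker : LinearMap.ker Φ = LinearMap.range (Submodule.inclusion hQI) := by
    ext y
    rw [LinearMap.mem_ker, hmemQ]
    constructor
    · intro h0
      have hmemS : ρmap y ∈ S := by
        have h1 : S.mkQ (ρmap y) = 0 := h0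
        rwa [Submodule.mkQ_apply, Submodule.Quotient.mk_eq_zero] at h1
      obtain ⟨a, ha⟩ := (mem_span_range_iff_exists_fun (R ⧸ I)).1 hmemS
      choose ρc hρc using fun i => Ideal.Quotient.mk_surjective (a i)
      have h2 : ρmap (∑ i, ρc i • qel i) = ρmap y := by
        rw [map_sum, ← ha]
        refine Finset.sum_congr rfl fun i _ => ?_
        rw [map_smul]
        funext j
        rw [Pi.smul_apply, Pi.smul_apply, hsm, hρc, smul_eq_mul, hv]
      have h3 : (y - ∑ i, ρc i • qel i : ↥I).val ∈ I ^ 2 := by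
        have : y - ∑ i, ρc i • qel i ∈ LinearMap.ker ρmap := by
          rw [LinearMap.mem_ker, map_sub, h2, sub_self]
        have h4 : ρmap (y - ∑ i, ρc i • qel i) = 0 := this
        exact (hkerρ _).1 h4
      have h5 : ((∑ i, ρc i • qel i : ↥I) : R) ∈ Ideal.span (Set.range q) := by
        push_cast
        refine Submodule.sum_mem _ fun i _ => ?_
        exact Submodule.smul_mem _ _ (Ideal.subset_span ⟨i, rfl⟩)
      have h6 : (y : R) = ((∑ i, ρc i • qel i : ↥I) : R) +
          (y - ∑ i, ρc i • qel i : ↥I).val := by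
        push_cast
        ring
      rw [h6]
      exact Submodule.add_mem _ h5 (hI2Q h3)
    · intro hyQ
      obtain ⟨ρc, hρc⟩ := (mem_span_range_iff_exists_fun R).1 hyQ
      have hyel : y = ∑ i, ρc i • qel i := by
        apply Subtype.ext
        push_cast
        rw [← hρc]
      show S.mkQ (ρmap y) = 0
      rw [Submodule.mkQ_apply, Submodule.Quotient.mk_eq_zero, hyel, map_sum]
      refine Submodule.sum_mem _ fun i _ => ?_
      rw [map_smul]
      have : ρc i • v i = (Ideal.Quotient.mk I (ρc i)) • v i := by
        funext j
        rw [Pi.smul_apply, Pi.smul_apply, hsm, smul_eq_mul]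
      rw [this]
      exact Submodule.smul_mem _ _ (Submodule.subset_span ⟨i, rfl⟩)
  exact ⟨(Submodule.quotEquivOfEq _ _ hΦker.symm).trans
    ((Φ.quotKerEquivOfSurjective hΦsurj).trans (Efree.restrictScalars R))⟩
end
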